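/- For every integer r ≥ 1 and every graph G, if the treewidth of G is at least 2r − 1, then G contains θ_r as a minor. -/

import Mathlib

open SimpleGraph

/-- `H` is a model of `θ_r` in `G`: its vertex set splits into two disjoint
connected parts with exactly `r` edges of `H` between them (so contracting
each part yields the multigraph with two vertices and `r` parallel edges). -/
def IsThetaModel {V : Type} (r : ℕ) (G : SimpleGraph V) (H : G.Subgraph) : Prop :=
  ∃ A B : Set V, A ∪ B = H.verts ∧ Disjoint A B ∧
    (H.induce A).Connected ∧ (H.induce B).Connected ∧
    {e ∈ H.edgeSet | ∃ a ∈ A, ∃ b ∈ B, e = s(a, b)}.ncard = r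

/-- A tree decomposition of `G` with index type `ι`. -/
structure TreeDecomp {V : Type} (G : SimpleGraph V) (ι : Type) where
  tree : SimpleGraph ι
  isTree : tree.IsTree
  bag : ι → Set V
  mem_bag : ∀ v, ∃ i, v ∈ bag i
  edge_bag : ∀ ⦃u v⦄, G.Adj u v → ∃ i, u ∈ bag i ∧ v ∈ bag i
  conn_bag : ∀ v, (tree.induce {i | v ∈ bag i}).Connected

section ThetaHelpers

open Relation

lemma rtg_comparable {α : Type*} {step : α → α → Prop}
    (hfun : ∀ a b c, step a b → step a c → b = c) {x a b : α}
    (h1 : ReflTransGen step x a) (h2 : ReflTransGen step x b) :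
    ReflTransGen step a b ∨ ReflTransGen step b a := by
  induction h1 using ReflTransGen.head_induction_on generalizing b with
  | refl => exact Or.inl h2
  | head hstep htail ih =>
    rename_i x' c
    rcases h2.cases_head with rfl | ⟨c', hc', h2'⟩
    · exact Or.inr (ReflTransGen.head hstep htail)
    · exact ih (hfun _ _ _ hstep hc' ▸ h2')

lemma rtg_measure {α : Type*} {step : α → α → Prop} {f : α → ℕ}
    (hdec : ∀ a b, step a b → f b < f a) {x y : α}
    (h : ReflTransGen step x y) : x = y ∨ f y < f x := by
  induction h with
  | refl => exact Or.inl rfl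
  | tail hs ht ih =>
    rcases ih with rfl | ih
    · exact Or.inr (hdec _ _ ht)
    · exact Or.inr ((hdec _ _ ht).trans ih)

lemma nodup_fst_functional {α β : Type*} {l : List (α × β)}
    (h : (l.map Prod.fst).Nodup) {a : α} {b c : β}
    (hb : (a, b) ∈ l) (hc : (a, c) ∈ l) : b = c := by
  induction l with
  | nil => cases hb
  | cons q t ih =>
    simp only [List.map_cons, List.nodup_cons] at h
    rcases List.mem_cons.1 hb with rfl | hb' <;>
      rcases List.mem_cons.1 hc with h2 | hc'
    · cases h2; rfl
    · exact absurd (List.mem_map_of_mem (f := Prod.fst) hc') (by simpa using h.1)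
    · cases h2; exact absurd (List.mem_map_of_mem (f := Prod.fst) hb') (by simpa using h.1)
    · exact ih h.2 hb' hc'

lemma sublist_index_lt {V : Type} [DecidableEq V] {ord : List V} (hn : ord.Nodup) {a b : V}
    (h : [b, a].Sublist ord) : ord.idxOf b < ord.idxOf a := by
  induction ord with
  | nil => cases h
  | cons x t ih =>
    rw [List.nodup_cons] at hn
    cases h with
    | cons _ h' =>
      have hbt : b ∈ t := h'.subset (by simp)
      have hat : a ∈ t := h'.subset (by simp)
      have hbx : b ≠ x := fun e => hn.1 (e ▸ hbt)
      have hax : a ≠ x := fun e => hn.1 (e ▸ hat)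
      rw [List.idxOf_cons_ne _ (by simpa using hbx.symm), List.idxOf_cons_ne _ (by simpa using hax.symm)]
      exact Nat.succ_lt_succ (ih hn.2 h')
    | cons_cons _ h' =>
      have hat : a ∈ t := h'.subset (by simp)
      have hax : a ≠ b := fun e => hn.1 (e ▸ hat)
      rw [List.idxOf_cons_self, List.idxOf_cons_ne _ (by simpa using hax.symm)]
      exact Nat.succ_pos _

lemma induce_connected_of_measure {ι : Type} (T : SimpleGraph ι) (S : Set ι) (t : ι)
    (ht : t ∈ S) (g : ι → ℕ)
    (h : ∀ i ∈ S, i ≠ t → ∃ j ∈ S, T.Adj i j ∧ g j < g i) :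
    (T.induce S).Connected := by
  rw [connected_iff_exists_forall_reachable]
  refine ⟨⟨t, ht⟩, ?_⟩
  suffices h' : ∀ n i (hi : i ∈ S), g i ≤ n → (T.induce S).Reachable ⟨t, ht⟩ ⟨i, hi⟩ by
    rintro ⟨i, hi⟩; exact h' (g i) i hi le_rfl
  intro n
  induction n using Nat.strong_induction_on with
  | _ n ih =>
    intro i hi hn
    by_cases hit : i = t
    · subst hit; rfl
    · obtain ⟨j, hj, hadj, hlt⟩ := h i hi hit
      have : (T.induce S).Adj ⟨j, hj⟩ ⟨i, hi⟩ := by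
        simp [hadj.symm]
      exact (ih (g j) (lt_of_lt_of_le hlt hn) j hj le_rfl).trans this.reachable

lemma subgraph_induce_connected_of_measure {V : Type} {G : SimpleGraph V} (A : Set V) (t : V)
    (ht : t ∈ A) (g : V → ℕ)
    (h : ∀ x ∈ A, x ≠ t → ∃ y ∈ A, G.Adj x y ∧ g y < g x) :
    ((⊤ : G.Subgraph).induce A).Connected := by
  rw [SimpleGraph.Subgraph.connected_iff', connected_iff_exists_forall_reachable]
  have hverts : ((⊤ : G.Subgraph).induce A).verts = A := rfl
  refine ⟨⟨t, ht⟩, ?_⟩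
  suffices h' : ∀ n x (hx : x ∈ A), g x ≤ n →
      ((⊤ : G.Subgraph).induce A).coe.Reachable ⟨t, ht⟩ ⟨x, hx⟩ by
    rintro ⟨x, hx⟩; exact h' (g x) x hx le_rfl
  intro n
  induction n using Nat.strong_induction_on with
  | _ n ih =>
    intro x hx hn
    by_cases hxt : x = t
    · subst hxt; rfl
    · obtain ⟨y, hy, hadj, hlt⟩ := h x hx hxt
      have : ((⊤ : G.Subgraph).induce A).coe.Adj ⟨y, hy⟩ ⟨x, hx⟩ := by
        rw [Subgraph.coe_adj, Subgraph.induce_adj]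
        exact ⟨hy, hx, by simpa using hadj.symm⟩
      exact (ih (g y) (lt_of_lt_of_le hlt hn) y hy le_rfl).trans this.reachable

lemma acyclic_of_measure {ι : Type} (T : SimpleGraph ι) (g : ι → ℕ)
    (h1 : ∀ a b, T.Adj a b → g a ≠ g b)
    (h2 : ∀ a b c, T.Adj a b → T.Adj a c → g b < g a → g c < g a → b = c) :
    T.IsAcyclic := by
  intro v c hc
  classical
  -- pick a vertex of maximal g on the cycle
  have hsne : c.support.toFinset.Nonempty := by
    rw [List.toFinset_nonempty_iff]; exact c.support_ne_nil
  obtain ⟨m, hm', hmax'⟩ := Finset.exists_max_image c.support.toFinset g hsne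
  rw [List.mem_toFinset] at hm'
  have hmax : ∀ w ∈ c.support, g w ≤ g m := by
    intro w hw; exact hmax' w (List.mem_toFinset.2 hw)
  set c' := c.rotate m hm' with hc'def
  have hc' : c'.IsCycle := hc.rotate hm'
  have hmemc' : ∀ z, z ∈ c'.support → z ∈ c.support := by
    intro z hz
    rw [c'.support_eq_cons] at hz
    rcases List.mem_cons.1 hz with rfl | hz'
    · exact hm'
    · have := (SimpleGraph.Walk.support_rotate c m hm').mem_iff.1 hz'
      exact List.mem_of_mem_tail this
  clear_value c'
  cases c' with
  | nil => exact hc'.ne_nil rfl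
  | cons h p =>
    rename_i w₁
    have hlen : 2 ≤ p.length := by
      have := hc'.three_le_length
      simp only [SimpleGraph.Walk.length_cons] at this
      omega
    cases p with
    | nil => simp at hlen
    | cons hp p₂ =>
      rename_i w₁'
      obtain ⟨x, q, h', hqe⟩ := SimpleGraph.Walk.exists_cons_eq_concat hp p₂
      -- support facts
      have hnd : (SimpleGraph.Walk.cons hp p₂).support.Nodup := by
        have := hc'.support_nodup
        simpa using this
      have hqsupp : (SimpleGraph.Walk.cons hp p₂).support = q.support ++ [m] := by
        rw [hqe]; simp
      have hmq : m ∉ q.support := by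
        rw [hqsupp] at hnd
        exact fun hmem => (List.disjoint_of_nodup_append hnd) hmem (by simp)
      have hxq : x ∈ q.support := SimpleGraph.Walk.end_mem_support q
      have hxm : x ≠ m := fun e => hmq (e ▸ hxq)
      have hw1m : w₁ ≠ m := fun e => hmq (e ▸ SimpleGraph.Walk.start_mem_support q)
      -- w₁ ≠ x
      have hw1x : w₁ ≠ x := by
        intro e
        have hndq : q.support.Nodup := by
          rw [hqsupp] at hnd
          exact (List.nodup_append.1 hnd).1
        subst e
        by_cases hq0 : q.length = 0
        · have hlc : (SimpleGraph.Walk.cons hp p₂).length = q.length + 1 := by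
            rw [hqe, SimpleGraph.Walk.length_concat]
          simp only [SimpleGraph.Walk.length_cons] at hlc hlen
          omega
        · have htl : q.support.tail ≠ [] := by
            have hsl : q.support.length = q.length + 1 := SimpleGraph.Walk.length_support q
            intro hnil
            have : q.support.length ≤ 1 := by
              rw [q.support_eq_cons, hnil]; simp
            omega
          have hGL : q.support.getLast (by simp) = w₁ := SimpleGraph.Walk.getLast_support q
          have hGLq : q.support.getLast? = some w₁ := by
            rw [List.getLast?_eq_getLast (by simp : q.support ≠ [])]
            exact congrArg some (SimpleGraph.Walk.getLast_support q)
          have key : ∀ (t : List ι), q.support = w₁ :: t → t ≠ [] → w₁ ∈ t := by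
            intro t hteq htne
            rw [hteq] at hGLq
            have hgl2 : (w₁ :: t).getLast (by simp) = w₁ := by
              rwa [List.getLast?_eq_getLast (by simp : w₁ :: t ≠ []), Option.some_inj] at hGLq
            rw [List.getLast_cons htne] at hgl2
            exact hgl2 ▸ List.getLast_mem htne
          have hmem : w₁ ∈ q.support.tail := by
            refine key q.support.tail q.support_eq_cons ?_
            exact htl
          rw [q.support_eq_cons, List.nodup_cons] at hndq
          exact hndq.1 hmem
      -- adjacency and measures
      have hadj1 : T.Adj m w₁ := h
      have hadj2 : T.Adj m x := h'.symm
      have hw1mem : w₁ ∈ c.support := by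
        apply hmemc'
        simp [SimpleGraph.Walk.support_cons]
      have hxmem : x ∈ c.support := by
        apply hmemc'
        rw [SimpleGraph.Walk.support_cons, hqsupp]
        simp [hxq]
      have hg1 : g w₁ < g m := lt_of_le_of_ne (hmax _ hw1mem) (fun e => h1 _ _ hadj1 e.symm)
      have hg2 : g x < g m := lt_of_le_of_ne (hmax _ hxmem) (fun e => h1 _ _ hadj2 e.symm)
      exact hw1x (h2 m w₁ x hadj1 hadj2 hg1 hg2)

end ThetaHelpers

section ThetaDFS

open Relation

variable {V : Type} (G : SimpleGraph V)

structure DFSForest where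
  ord : List V
  pairs : List (V × V)
  ord_nodup : ord.Nodup
  fst_nodup : (pairs.map Prod.fst).Nodup
  adj_pairs : ∀ q ∈ pairs, G.Adj q.1 q.2 ∧ [q.2, q.1].Sublist ord
  comparable : ∀ u v, G.Adj u v →
    ReflTransGen (fun a b => (a, b) ∈ pairs) u v ∨
    ReflTransGen (fun a b => (a, b) ∈ pairs) v u

lemma explore [Fintype V] (n : ℕ) : ∀ (w : V) (W : Finset V), W.card ≤ n → w ∉ W →
    ∃ L : List (V × V),
      ((L.map Prod.fst).Nodup ∧ ∀ q ∈ L, q.1 ∈ W) ∧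
      (∀ q ∈ L, G.Adj q.1 q.2 ∧ (q.2 = w ∨ [q.2, q.1].Sublist (L.map Prod.fst))) ∧
      (∀ x ∈ W, x ∉ L.map Prod.fst → ∀ y, (y ∈ L.map Prod.fst ∨ y = w) → ¬ G.Adj x y) ∧
      (∀ x y, x ∈ L.map Prod.fst → y ∈ L.map Prod.fst → G.Adj x y →
        ReflTransGen (fun a b => (a, b) ∈ L) x y ∨ ReflTransGen (fun a b => (a, b) ∈ L) y x) ∧
      (∀ y ∈ L.map Prod.fst, ReflTransGen (fun a b => (a, b) ∈ L) y w) := by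
  induction n with
  | zero =>
    intro w W hcard hw
    refine ⟨[], ⟨List.nodup_nil, by simp⟩, by simp, ?_, by simp, by simp⟩
    intro x hx
    have : W = ∅ := Finset.card_eq_zero.1 (Nat.le_zero.1 hcard)
    simp [this] at hx
  | succ n ih =>
    intro w W hcard hw
    classical
    by_cases hex : ∃ x ∈ W, G.Adj w x
    · obtain ⟨x, hxW, hadj⟩ := hex
      have hc1 : (W.erase x).card ≤ n := by
        rw [Finset.card_erase_of_mem hxW]; omega
      obtain ⟨L₁, ⟨hN₁, hMem₁⟩, hE2₁, hE3₁, hE4₁, hE5₁⟩ :=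
        ih x (W.erase x) hc1 (Finset.notMem_erase x W)
      set Vis₁ := L₁.map Prod.fst with hVis₁
      set W' := (W.erase x).filter (fun y => y ∉ Vis₁) with hW'
      have hW'sub : W' ⊆ W.erase x := Finset.filter_subset _ _
      have hc2 : W'.card ≤ n := le_trans (Finset.card_le_card hW'sub) hc1
      have hwW' : w ∉ W' := fun hmem => hw (Finset.mem_of_mem_erase (hW'sub hmem))
      obtain ⟨L₂, ⟨hN₂, hMem₂⟩, hE2₂, hE3₂, hE4₂, hE5₂⟩ := ih w W' hc2 hwW'
      set Vis₂ := L₂.map Prod.fst with hVis₂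
      have hV₁W : ∀ y ∈ Vis₁, y ∈ W.erase x := by
        intro y hy
        obtain ⟨q, hq, rfl⟩ := List.mem_map.1 hy
        exact hMem₁ q hq
      have hV₂W' : ∀ y ∈ Vis₂, y ∈ W' := by
        intro y hy
        obtain ⟨q, hq, rfl⟩ := List.mem_map.1 hy
        exact hMem₂ q hq
      have hxV₁ : x ∉ Vis₁ := fun h => (Finset.notMem_erase x W) (hV₁W x h)
      have hxV₂ : x ∉ Vis₂ := fun h => (Finset.notMem_erase x W) (hW'sub (hV₂W' x h))
      have hdisj : ∀ y ∈ Vis₂, y ∉ Vis₁ := fun y hy =>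
        (Finset.mem_filter.1 (hV₂W' y hy)).2
      have hmapfst : (((x, w) :: L₁ ++ L₂).map Prod.fst) = x :: (Vis₁ ++ Vis₂) := by simp [hVis₁, hVis₂]
      have hlift₁ : ∀ {a b : V}, ReflTransGen (fun a b => (a, b) ∈ L₁) a b →
          ReflTransGen (fun a b : V => (a, b) ∈ (x, w) :: L₁ ++ L₂) a b := fun h =>
        by induction h with
          | refl => exact ReflTransGen.refl
          | tail _ hab ih => exact ih.tail (by simp [hab])
      have hlift₂ : ∀ {a b : V}, ReflTransGen (fun a b => (a, b) ∈ L₂) a b →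
          ReflTransGen (fun a b : V => (a, b) ∈ (x, w) :: L₁ ++ L₂) a b := fun h =>
        by induction h with
          | refl => exact ReflTransGen.refl
          | tail _ hab ih => exact ih.tail (by simp [hab])
      have hno2 : ∀ a ∈ Vis₂, ∀ b, (b ∈ Vis₁ ∨ b = x) → ¬ G.Adj a b := by
        intro a ha b hb
        exact hE3₁ a (hW'sub (hV₂W' a ha)) ((Finset.mem_filter.1 (hV₂W' a ha)).2) b hb
      refine ⟨(x, w) :: L₁ ++ L₂, ⟨?_, ?_⟩, ?_, ?_, ?_, ?_⟩
      · -- nodup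
        rw [hmapfst, List.nodup_cons, List.nodup_append]
        refine ⟨?_, hN₁, hN₂, fun a ha b hb hab => hdisj b hb (hab ▸ ha)⟩
        simp only [List.mem_append]
        rintro (h | h)
        · exact hxV₁ h
        · exact hxV₂ h
      · -- membership
        rintro q hq
        rcases List.mem_cons.1 hq with rfl | hq'
        · exact hxW
        rcases List.mem_append.1 hq' with h1 | h2
        · exact Finset.mem_of_mem_erase (hMem₁ q h1)
        · exact Finset.mem_of_mem_erase (hW'sub (hMem₂ q h2))
      · -- adjacency and ordering of pairs
        rintro q hq
        rcases List.mem_cons.1 hq with rfl | hq'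
        · exact ⟨hadj.symm, Or.inl rfl⟩
        rcases List.mem_append.1 hq' with h1 | h2
        · refine ⟨(hE2₁ q h1).1, Or.inr ?_⟩
          rw [hmapfst]
          rcases (hE2₁ q h1).2 with he | hs
          · rw [he]
            exact List.Sublist.cons_cons x (List.singleton_sublist.2
              (List.mem_append_left _ (List.mem_map_of_mem (f := Prod.fst) h1)))
          · exact (hs.trans (List.sublist_append_left Vis₁ Vis₂)).cons x
        · refine ⟨(hE2₂ q h2).1, ?_⟩
          rcases (hE2₂ q h2).2 with he | hs
          · exact Or.inl he
          · refine Or.inr ?_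
            rw [hmapfst]
            exact (hs.trans (List.sublist_append_right Vis₁ Vis₂)).cons x
      · -- separation
        intro x' hx'W hx'n y hy hadjxy
        rw [hmapfst] at hx'n hy
        simp only [List.mem_cons, List.mem_append, not_or] at hx'n
        obtain ⟨hx'x, hx'V₁, hx'V₂⟩ := hx'n
        have hx'W' : x' ∈ W' := Finset.mem_filter.2 ⟨Finset.mem_erase.2 ⟨hx'x, hx'W⟩, hx'V₁⟩
        rcases hy with hy | rfl
        · rcases List.mem_cons.1 hy with rfl | hy'
          · exact hE3₁ x' (Finset.mem_erase.2 ⟨hx'x, hx'W⟩) hx'V₁ y (Or.inr rfl) hadjxy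
          rcases List.mem_append.1 hy' with h1 | h2
          · exact hE3₁ x' (Finset.mem_erase.2 ⟨hx'x, hx'W⟩) hx'V₁ y (Or.inl h1) hadjxy
          · exact hE3₂ x' hx'W' hx'V₂ y (Or.inl h2) hadjxy
        · exact hE3₂ x' hx'W' hx'V₂ y (Or.inr rfl) hadjxy
      · -- comparability
        intro u v hu hv hadjuv
        rw [hmapfst] at hu hv
        simp only [List.mem_cons, List.mem_append] at hu hv
        rcases hu with rfl | hu1 | hu2 <;> rcases hv with rfl | hv1 | hv2
        · exact (hadjuv.ne rfl).elim
        · exact Or.inr (hlift₁ (hE5₁ v hv1))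
        · exact (hno2 v hv2 u (Or.inr rfl) hadjuv.symm).elim
        · exact Or.inl (hlift₁ (hE5₁ u hu1))
        · exact (hE4₁ u v hu1 hv1 hadjuv).imp hlift₁ hlift₁
        · exact (hno2 v hv2 u (Or.inl hu1) hadjuv.symm).elim
        · exact (hno2 u hu2 v (Or.inr rfl) hadjuv).elim
        · exact (hno2 u hu2 v (Or.inl hv1) hadjuv).elim
        · exact (hE4₂ u v hu2 hv2 hadjuv).imp hlift₂ hlift₂
      · -- reaching the root
        intro y hy
        rw [hmapfst] at hy
        simp only [List.mem_cons, List.mem_append] at hy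
        rcases hy with rfl | hy1 | hy2
        · exact ReflTransGen.single (by simp)
        · exact (hlift₁ (hE5₁ y hy1)).tail (by simp)
        · exact hlift₂ (hE5₂ y hy2)
    · push_neg at hex
      refine ⟨[], ⟨List.nodup_nil, by simp⟩, by simp, ?_, by simp, by simp⟩
      rintro x hx - y (hy | rfl)
      · simp at hy
      · exact fun ha => hex x hx (ha.symm)

lemma buildAll[Fintype V] (n : ℕ) : ∀ (W : Finset V), W.card ≤ n →
    (∀ x ∈ W, ∀ y, y ∉ W → ¬ G.Adj x y) →
    ∃ (ord : List V) (pairs : List (V × V)),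
      ord.Nodup ∧ (∀ v ∈ W, v ∈ ord) ∧ (∀ v ∈ ord, v ∈ W) ∧
      (pairs.map Prod.fst).Nodup ∧
      (∀ q ∈ pairs, G.Adj q.1 q.2 ∧ [q.2, q.1].Sublist ord) ∧
      (∀ u v, u ∈ W → v ∈ W → G.Adj u v →
        ReflTransGen (fun a b => (a, b) ∈ pairs) u v ∨
        ReflTransGen (fun a b => (a, b) ∈ pairs) v u) := by
  induction n with
  | zero =>
    intro W hcard hW
    have hWe : W = ∅ := Finset.card_eq_zero.1 (Nat.le_zero.1 hcard)
    subst hWe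
    exact ⟨[], [], by simp, by simp, by simp, by simp, by simp, by simp⟩
  | succ n ih =>
    intro W hcard hW
    classical
    rcases W.eq_empty_or_nonempty with rfl | ⟨w, hwW⟩
    · exact ⟨[], [], by simp, by simp, by simp, by simp, by simp, by simp⟩
    have hc1 : (W.erase w).card ≤ n := by
      rw [Finset.card_erase_of_mem hwW]; omega
    obtain ⟨L, ⟨hN, hMem⟩, hE2, hE3, hE4, hE5⟩ :=
      explore G n w (W.erase w) hc1 (Finset.notMem_erase w W)
    set Vis := L.map Prod.fst with hVis
    set W'' := (W.erase w).filter (fun y => y ∉ Vis) with hW''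
    have hW''sub : W'' ⊆ W.erase w := Finset.filter_subset _ _
    have hc2 : W''.card ≤ n := le_trans (Finset.card_le_card hW''sub) hc1
    have hVmem : ∀ y ∈ Vis, y ∈ W.erase w := by
      intro y hy
      obtain ⟨q, hq, rfl⟩ := List.mem_map.1 hy
      exact hMem q hq
    have hsep : ∀ a ∈ W'', ∀ y, y ∉ W'' → ¬ G.Adj a y := by
      intro a ha y hy
      have haE : a ∈ W.erase w := hW''sub ha
      have haV : a ∉ Vis := (Finset.mem_filter.1 ha).2
      by_cases hyW : y ∈ W
      · have : y = w ∨ y ∈ Vis := by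
          by_contra hcon
          push_neg at hcon
          exact hy (Finset.mem_filter.2 ⟨Finset.mem_erase.2 ⟨hcon.1, hyW⟩, hcon.2⟩)
        rcases this with rfl | hyV
        · exact hE3 a haE haV y (Or.inr rfl)
        · exact hE3 a haE haV y (Or.inl hyV)
      · exact hW a (Finset.mem_of_mem_erase haE) y hyW
    obtain ⟨ord', pairs', hnd', hcov', hsub', hfst', hap', hcmp'⟩ := ih W'' hc2 hsep
    have hsub'E : ∀ v ∈ ord', v ∈ W.erase w := fun v hv => hW''sub (hsub' v hv)
    have hlift₁ : ∀ {a b : V}, ReflTransGen (fun a b => (a, b) ∈ L) a b →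
        ReflTransGen (fun a b : V => (a, b) ∈ L ++ pairs') a b := fun h =>
      by induction h with
        | refl => exact ReflTransGen.refl
        | tail _ hab ih => exact ih.tail (by simp [hab])
    have hlift₂ : ∀ {a b : V}, ReflTransGen (fun a b => (a, b) ∈ pairs') a b →
        ReflTransGen (fun a b : V => (a, b) ∈ L ++ pairs') a b := fun h =>
      by induction h with
        | refl => exact ReflTransGen.refl
        | tail _ hab ih => exact ih.tail (by simp [hab])
    refine ⟨w :: (Vis ++ ord'), L ++ pairs', ?_, ?_, ?_, ?_, ?_, ?_⟩
    · rw [List.nodup_cons, List.nodup_append]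
      refine ⟨?_, hN, hnd', ?_⟩
      · simp only [List.mem_append]
        rintro (h | h)
        · exact Finset.notMem_erase w W (hVmem w h)
        · exact Finset.notMem_erase w W (hsub'E w h)
      · intro a ha b hb hab
        subst hab
        exact (Finset.mem_filter.1 (hsub' a hb)).2 ha
    · intro v hv
      simp only [List.mem_cons, List.mem_append]
      by_cases h1 : v = w
      · exact Or.inl h1
      by_cases h2 : v ∈ Vis
      · exact Or.inr (Or.inl h2)
      · exact Or.inr (Or.inr (hcov' v (Finset.mem_filter.2 ⟨Finset.mem_erase.2 ⟨h1, hv⟩, h2⟩)))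
    · intro v hv
      rcases List.mem_cons.1 hv with rfl | hv'
      · exact hwW
      rcases List.mem_append.1 hv' with h1 | h2
      · exact Finset.mem_of_mem_erase (hVmem v h1)
      · exact Finset.mem_of_mem_erase (hsub'E v h2)
    · rw [List.map_append, List.nodup_append]
      refine ⟨hN, hfst', ?_⟩
      intro a ha b hb hab
      subst hab
      obtain ⟨q, hq, rfl⟩ := List.mem_map.1 hb
      have : q.1 ∈ ord' := ((hap' q hq).2).subset (by simp)
      exact (Finset.mem_filter.1 (hsub' _ this)).2 ha
    · intro q hq
      rcases List.mem_append.1 hq with h1 | h2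
      · refine ⟨(hE2 q h1).1, ?_⟩
        rcases (hE2 q h1).2 with he | hs
        · rw [he]
          exact List.Sublist.cons_cons w (List.singleton_sublist.2
            (List.mem_append_left _ (List.mem_map_of_mem (f := Prod.fst) h1)))
        · exact (hs.trans (List.sublist_append_left Vis ord')).cons w
      · exact ⟨(hap' q h2).1, ((hap' q h2).2.trans (List.sublist_append_right Vis ord')).cons w⟩
    · intro u v huW hvW hadj
      have hloc : ∀ z, z ∈ W → z = w ∨ z ∈ Vis ∨ z ∈ W'' := by
        intro z hz
        by_cases h1 : z = w
        · exact Or.inl h1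
        by_cases h2 : z ∈ Vis
        · exact Or.inr (Or.inl h2)
        · exact Or.inr (Or.inr (Finset.mem_filter.2 ⟨Finset.mem_erase.2 ⟨h1, hz⟩, h2⟩))
      have hnoV : ∀ a ∈ W'', ∀ b, (b ∈ Vis ∨ b = w) → ¬ G.Adj a b := fun a ha b hb =>
        hE3 a (hW''sub ha) ((Finset.mem_filter.1 ha).2) b hb
      rcases hloc u huW with rfl | hu1 | hu2 <;> rcases hloc v hvW with rfl | hv1 | hv2
      · exact (hadj.ne rfl).elim
      · exact Or.inr (hlift₁ (hE5 v hv1))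
      · exact (hnoV v hv2 u (Or.inr rfl) hadj.symm).elim
      · exact Or.inl (hlift₁ (hE5 u hu1))
      · exact (hE4 u v hu1 hv1 hadj).imp hlift₁ hlift₁
      · exact (hnoV v hv2 u (Or.inl hu1) hadj.symm).elim
      · exact (hnoV u hu2 v (Or.inr rfl) hadj).elim
      · exact (hnoV u hu2 v (Or.inl hv1) hadj).elim
      · exact (hcmp' u v hu2 hv2 hadj).imp hlift₂ hlift₂

lemma exists_dfsForest [Fintype V] : Nonempty (DFSForest G) := by
  classical
  obtain ⟨ord, pairs, hnd, hcov, hsub, hfst, hap, hcmp⟩ :=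
    buildAll G (Finset.univ.card) Finset.univ le_rfl (by simp)
  exact ⟨⟨ord, pairs, hnd, hfst, hap, fun u v h => hcmp u v (by simp) (by simp) h⟩⟩

end ThetaDFS

section ThetaCut

variable {V : Type} [Fintype V] {G : SimpleGraph V}

lemma cutbound {r : ℕ} (hr : 1 ≤ r) (hno : ∀ H : G.Subgraph, ¬ IsThetaModel r G H)
    (A B : Set V) (hd : Disjoint A B)
    (hA : ((⊤ : G.Subgraph).induce A).Connected)
    (hB : ((⊤ : G.Subgraph).induce B).Connected) :
    {e ∈ G.edgeSet | ∃ a ∈ A, ∃ b ∈ B, e = s(a, b)}.ncard < r := by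
  by_contra hge
  push_neg at hge
  set C := {e ∈ G.edgeSet | ∃ a ∈ A, ∃ b ∈ B, e = s(a, b)} with hC
  obtain ⟨S, hSC, hScard⟩ := Set.exists_subset_card_eq hge
  -- the subgraph witnessing the theta model
  set H : G.Subgraph :=
    { verts := A ∪ B
      Adj := fun x y => G.Adj x y ∧ ((x ∈ A ∧ y ∈ A) ∨ (x ∈ B ∧ y ∈ B) ∨ s(x, y) ∈ S)
      adj_sub := fun h => h.1
      edge_vert := by
        rintro x y ⟨hadj, (⟨h1, h2⟩ | ⟨h1, h2⟩ | hS)⟩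
        · exact Or.inl h1
        · exact Or.inr h1
        · obtain ⟨-, a, ha, b, hb, he⟩ := hSC hS
          rw [Sym2.eq_iff] at he
          rcases he with ⟨rfl, rfl⟩ | ⟨rfl, rfl⟩
          · exact Or.inl ha
          · exact Or.inr hb
      symm := ⟨by
        rintro x y ⟨hadj, h⟩
        refine ⟨hadj.symm, ?_⟩
        rw [Sym2.eq_swap]
        tauto⟩ } with hH
  apply hno H
  refine ⟨A, B, rfl, hd, ?_, ?_, ?_⟩
  · -- H.induce A = ⊤.induce A
    have : H.induce A = (⊤ : G.Subgraph).induce A := by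
      ext x y
      · rfl
      · simp only [Subgraph.induce_adj, Subgraph.top_adj, hH]
        constructor
        · rintro ⟨hx, hy, h, -⟩; exact ⟨hx, hy, h⟩
        · rintro ⟨hx, hy, h⟩; exact ⟨hx, hy, h, Or.inl ⟨hx, hy⟩⟩
    rw [this]; exact hA
  · have : H.induce B = (⊤ : G.Subgraph).induce B := by
      ext x y
      · rfl
      · simp only [Subgraph.induce_adj, Subgraph.top_adj, hH]
        constructor
        · rintro ⟨hx, hy, h, -⟩; exact ⟨hx, hy, h⟩
        · rintro ⟨hx, hy, h⟩; exact ⟨hx, hy, h, Or.inr (Or.inl ⟨hx, hy⟩)⟩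
    rw [this]; exact hB
  · -- the set of cross edges of H is S
    have hSeq : {e ∈ H.edgeSet | ∃ a ∈ A, ∃ b ∈ B, e = s(a, b)} = S := by
      ext e
      constructor
      · rintro ⟨heH, a, ha, b, hb, rfl⟩
        rw [Subgraph.mem_edgeSet] at heH
        obtain ⟨hadj, hcase⟩ := heH
        rcases hcase with ⟨h1, h2⟩ | ⟨h1, h2⟩ | hS
        · exact absurd (hd.ne_of_mem h2 hb) (fun h => h rfl)
        · exact absurd (hd.ne_of_mem ha h1) (fun h => h rfl)
        · exact hS
      · intro heS
        obtain ⟨heG, a, ha, b, hb, rfl⟩ := hSC heS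
        rw [SimpleGraph.mem_edgeSet] at heG
        refine ⟨?_, a, ha, b, hb, rfl⟩
        rw [Subgraph.mem_edgeSet]
        exact ⟨heG, Or.inr (Or.inr heS)⟩
    rw [hSeq, hScard]

end ThetaCut

open Relation in
/-- If G has treewidth at least 2r - 1 (every tree decomposition has a bag of
size larger than 2r - 1), then G contains a model of θ_r. -/
theorem stmt5 {V : Type} [Fintype V] (G : SimpleGraph V) (r : ℕ) (hr : 1 ≤ r)
    (htw : ∀ (ι : Type) (D : TreeDecomp G ι), ∃ i, 2 * r - 1 < (D.bag i).ncard) :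
    ∃ H : G.Subgraph, IsThetaModel r G H := by
  classical
  by_contra hno
  push_neg at hno
  obtain ⟨F⟩ := exists_dfsForest G
  set step : V → V → Prop := fun a b => (a, b) ∈ F.pairs with hstepdef
  set f : V → ℕ := fun v => F.ord.idxOf v with hfdef
  have hstepadj : ∀ {a b}, step a b → G.Adj a b := fun h => (F.adj_pairs _ h).1
  have hstepf : ∀ {a b}, step a b → f b < f a := fun h =>
    sublist_index_lt F.ord_nodup (F.adj_pairs _ h).2
  have hfun : ∀ a b c, step a b → step a c → b = c := fun a b c hb hc =>
    nodup_fst_functional F.fst_nodup hb hc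
  have hmeas : ∀ {x y}, ReflTransGen step x y → x = y ∨ f y < f x :=
    fun h => rtg_measure (fun a b hab => hstepf hab) h
  -- bag definitions
  set Q : V → Set V := fun v =>
    {u | ReflTransGen step v u ∧ u ≠ v ∧ ∃ x, ReflTransGen step x v ∧ G.Adj u x} with hQdef
  set bag : Option V → Set V := fun i => i.elim ∅ (fun v => {v} ∪ Q v) with hbagdef
  set g' : Option V → ℕ := fun i => i.elim 0 (fun v => f v + 1) with hg'def
  set root : V → Prop := fun a => ∀ b, ¬ step a b with hrootdef
  -- the tree
  set T : SimpleGraph (Option V) :=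
    { Adj := fun i j =>
        (∃ a b, step a b ∧ ((i = some a ∧ j = some b) ∨ (j = some a ∧ i = some b))) ∨
        (∃ a, root a ∧ ((i = some a ∧ j = none) ∨ (j = some a ∧ i = none)))
      symm := ⟨by
        rintro i j (⟨a, b, hs, hc⟩ | ⟨a, hr', hc⟩)
        · exact Or.inl ⟨a, b, hs, hc.symm⟩
        · exact Or.inr ⟨a, hr', hc.symm⟩⟩
      loopless := ⟨by
        rintro i (⟨a, b, hs, (⟨rfl, he⟩ | ⟨rfl, he⟩)⟩ | ⟨a, hr', (⟨rfl, he⟩ | ⟨rfl, he⟩)⟩)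
        · rw [Option.some_inj] at he
          subst he
          exact absurd rfl (Nat.ne_of_lt (hstepf hs)).symm
        · rw [Option.some_inj] at he
          subst he
          exact absurd rfl (Nat.ne_of_lt (hstepf hs)).symm
        · exact Option.some_ne_none a he
        · exact Option.some_ne_none a he⟩ } with hTdef
  have h1 : ∀ i j, T.Adj i j → g' i ≠ g' j := by
    rintro i j (⟨a, b, hs, (⟨rfl, rfl⟩ | ⟨rfl, rfl⟩)⟩ | ⟨a, hr', (⟨rfl, rfl⟩ | ⟨rfl, rfl⟩)⟩)
    · have := hstepf hs; simp only [hg'def, Option.elim]; omega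
    · have := hstepf hs; simp only [hg'def, Option.elim]; omega
    · simp [hg'def]
    · simp [hg'def]
  have hsmaller : ∀ x j, T.Adj (some x) j → g' j < g' (some x) →
      (∃ b, j = some b ∧ step x b) ∨ (j = none ∧ root x) := by
    rintro x j (⟨a, b, hs, (⟨hia, hjb⟩ | ⟨hja, hib⟩)⟩ | ⟨a, hr', (⟨hia, hjn⟩ | ⟨hja, hin⟩)⟩) hlt
    · rw [Option.some_inj] at hia
      subst hia
      exact Or.inl ⟨b, hjb, hs⟩
    · subst hja
      rw [Option.some_inj] at hib
      subst hib
      have := hstepf hs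
      simp only [hg'def, Option.elim] at hlt
      omega
    · rw [Option.some_inj] at hia
      subst hia
      exact Or.inr ⟨hjn, hr'⟩
    · exact absurd hin (Option.some_ne_none x)
  have h2 : ∀ i j k, T.Adj i j → T.Adj i k → g' j < g' i → g' k < g' i → j = k := by
    intro i j k hij hik hj hk
    match i with
    | none =>
      exfalso
      rcases hij with ⟨a, b, hs, (⟨hia, hjb⟩ | ⟨hja, hib⟩)⟩ | ⟨a, hr', (⟨hia, hjn⟩ | ⟨hja, hin⟩)⟩
      · exact absurd hia (by simp)
      · subst hja
        simp only [hg'def, Option.elim] at hj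
        omega
      · exact absurd hia (by simp)
      · subst hja
        simp only [hg'def, Option.elim] at hj
        omega
    | some x =>
      rcases hsmaller x j hij hj with ⟨b, rfl, hsb⟩ | ⟨rfl, hrx⟩ <;>
        rcases hsmaller x k hik hk with ⟨c, rfl, hsc⟩ | ⟨rfl, hrx'⟩
      · rw [hfun x b c hsb hsc]
      · exact absurd hsb (hrx' b)
      · exact absurd hsc (hrx c)
      · rfl
  have hTconn : T.Connected := by
    rw [connected_iff_exists_forall_reachable]
    refine ⟨none, ?_⟩
    have key : ∀ n i, g' i ≤ n → T.Reachable i none := by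
      intro n
      induction n using Nat.strong_induction_on with
      | _ n ih =>
        intro i hi
        match i with
        | none => exact Reachable.refl none
        | some v =>
          by_cases hrv : root v
          · exact (Adj.reachable (Or.inr ⟨v, hrv, Or.inl ⟨rfl, rfl⟩⟩))
          · simp only [hrootdef] at hrv
            push_neg at hrv
            obtain ⟨b, hb⟩ := hrv
            have hadj : T.Adj (some v) (some b) := Or.inl ⟨v, b, hb, Or.inl ⟨rfl, rfl⟩⟩
            have hlt : g' (some b) < g' (some v) := by
              have := hstepf hb
              simp only [hg'def, Option.elim]
              omega
            exact hadj.reachable.trans (ih (g' (some b)) (lt_of_lt_of_le hlt hi) _ le_rfl)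
    exact fun i => (key (g' i) i le_rfl).symm
  -- the tree decomposition
  set D : TreeDecomp G (Option V) :=
    { tree := T
      isTree := ⟨hTconn, acyclic_of_measure T g' h1 h2⟩
      bag := bag
      mem_bag := fun v => ⟨some v, Or.inl rfl⟩
      edge_bag := by
        intro u v hadj
        rcases F.comparable u v hadj with hc | hc
        · exact ⟨some u, Or.inl rfl,
            Or.inr ⟨hc, (hadj.ne).symm ∘ Eq.symm ∘ Eq.symm, u, ReflTransGen.refl, hadj.symm⟩⟩
        · exact ⟨some v, Or.inr ⟨hc, hadj.ne, v, ReflTransGen.refl, hadj⟩, Or.inl rfl⟩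
      conn_bag := by
        intro u
        apply induce_connected_of_measure T _ (some u) (Or.inl rfl) g'
        rintro i hi hne
        match i with
        | none => exact absurd hi (by simp [hbagdef])
        | some v =>
          rcases hi with he | ⟨hanc, hneq, x, hax, hadjux⟩
          · exact absurd (congrArg some he).symm hne
          · obtain ⟨c, hvc, hcu⟩ := hanc.cases_head.resolve_left (fun e => hneq e.symm)
            refine ⟨some c, ?_, Or.inl ⟨v, c, hvc, Or.inl ⟨rfl, rfl⟩⟩, ?_⟩
            · by_cases hcu' : c = u
              · subst hcu'; exact Or.inl rfl
              · exact Or.inr ⟨hcu, fun e => hcu' e.symm, x, hax.tail hvc, hadjux⟩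
            · have := hstepf hvc
              simp only [hg'def, Option.elim]
              omega } with hDdef
  obtain ⟨i, hbig⟩ := htw (Option V) D
  match i with
  | none =>
    rw [show D.bag none = ∅ from rfl] at hbig
    exact absurd hbig (by simp)
  | some v =>
    have hQbound : (Q v).ncard ≤ r - 1 := by
      rcases (Q v).eq_empty_or_nonempty with hQe | hQne
      · simp [hQe]
      obtain ⟨u₀, hu₀Q, hmax⟩ := Set.exists_max_image (Q v) f (Set.toFinite _) hQne
      obtain ⟨hancu₀, hneq₀, -⟩ := hu₀Q
      have hfu₀ : f u₀ < f v := (hmeas hancu₀).resolve_left (fun e => hneq₀ e.symm)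
      set A : Set V := {a | ReflTransGen step u₀ a} with hAdef
      set B : Set V := {x | ReflTransGen step x v} with hBdef
      have hdisj : Disjoint A B := by
        rw [Set.disjoint_left]
        rintro a haA haB
        have h1' : f a ≤ f u₀ := by
          rcases hmeas haA with rfl | h
          · exact le_rfl
          · exact h.le
        have h2' : f v ≤ f a := by
          rcases hmeas haB with rfl | h
          · exact le_rfl
          · exact h.le
        omega
      -- a root above u₀
      have hroot_ex : ∀ n a, f a ≤ n → ∃ t, ReflTransGen step a t ∧ root t := by
        intro n
        induction n using Nat.strong_induction_on with
        | _ n ih =>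
          intro a ha
          by_cases hra : root a
          · exact ⟨a, ReflTransGen.refl, hra⟩
          · simp only [hrootdef] at hra
            push_neg at hra
            obtain ⟨b, hb⟩ := hra
            obtain ⟨t, htt, hrt⟩ := ih (f b) (lt_of_lt_of_le (hstepf hb) ha) b le_rfl
            exact ⟨t, ReflTransGen.head hb htt, hrt⟩
      obtain ⟨t, htanc, hrt⟩ := hroot_ex (f u₀) u₀ le_rfl
      have hAconn : ((⊤ : G.Subgraph).induce A).Connected := by
        apply subgraph_induce_connected_of_measure A t htanc f
        intro a ha hat
        have hcmp := rtg_comparable hfun ha htanc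
        have : ReflTransGen step a t := by
          rcases hcmp with h | h
          · exact h
          · rcases h.cases_head with rfl | ⟨c, hc, -⟩
            · exact ReflTransGen.refl
            · exact absurd hc (hrt c)
        obtain ⟨c, hc, -⟩ := this.cases_head.resolve_left hat
        exact ⟨c, ha.tail hc, hstepadj hc, hstepf hc⟩
      have hBconn : ((⊤ : G.Subgraph).induce B).Connected := by
        apply subgraph_induce_connected_of_measure B v ReflTransGen.refl f
        intro a ha hat
        obtain ⟨c, hc, hcv⟩ := ha.cases_head.resolve_left hat
        exact ⟨c, hcv, hstepadj hc, hstepf hc⟩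
      have hcut := cutbound hr hno A B hdisj hAconn hBconn
      set φ : V → Sym2 V := fun u =>
        if h : ∃ x, ReflTransGen step x v ∧ G.Adj u x then s(u, Classical.choose h)
        else s(u, u) with hφdef
      have hφmem : ∀ u ∈ Q v, φ u ∈ {e ∈ G.edgeSet | ∃ a ∈ A, ∃ b ∈ B, e = s(a, b)} := by
        rintro u ⟨hanc, hneq, hex⟩
        have hspec := Classical.choose_spec hex
        have hφu : φ u = s(u, Classical.choose hex) := dif_pos hex
        rw [hφu]
        refine ⟨by rw [SimpleGraph.mem_edgeSet]; exact hspec.2, u, ?_, Classical.choose hex,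
          hspec.1, rfl⟩
        -- u ∈ A
        rcases rtg_comparable hfun hanc hancu₀ with h | h
        · have : u = u₀ := by
            rcases hmeas h with h' | h'
            · exact h'
            · exact absurd (hmax u ⟨hanc, hneq, hex⟩) (by omega)
          rw [this]
          exact ReflTransGen.refl
        · exact h
      have hφinj : Set.InjOn φ (Q v) := by
        rintro u hu u' hu' he
        have hexu : ∃ x, ReflTransGen step x v ∧ G.Adj u x := hu.2.2
        have hexu' : ∃ x, ReflTransGen step x v ∧ G.Adj u' x := hu'.2.2
        rw [show φ u = s(u, Classical.choose hexu) from dif_pos hexu,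
          show φ u' = s(u', Classical.choose hexu') from dif_pos hexu'] at he
        rw [Sym2.eq_iff] at he
        rcases he with ⟨h, -⟩ | ⟨h, h'⟩
        · exact h
        · exfalso
          have hfu : f u < f v := (hmeas hu.1).resolve_left (fun e => hu.2.1 e.symm)
          have hspec' := (Classical.choose_spec hexu').1
          rcases hmeas hspec' with h'' | h''
          · exact hu.2.1 (h.trans h'')
          · rw [← h] at h''
            omega
      calc (Q v).ncard = (φ '' (Q v)).ncard := (Set.ncard_image_of_injOn hφinj).symm
        _ ≤ {e ∈ G.edgeSet | ∃ a ∈ A, ∃ b ∈ B, e = s(a, b)}.ncard :=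
            Set.ncard_le_ncard (Set.image_subset_iff.2 hφmem) (Set.toFinite _)
        _ ≤ r - 1 := by omega
    have hbag : D.bag (some v) = {v} ∪ Q v := rfl
    rw [hbag] at hbig
    have hle : ({v} ∪ Q v).ncard ≤ 1 + (Q v).ncard := by
      refine le_trans (Set.ncard_union_le _ _) ?_
      simp
    omega
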